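/- Let k ≥ 1, m ≥ 1 and n ≥ 1 be integers, let A be an n×n matrix over R_{k,m}, and let C ⊆ R_{k,m}^{2n} be the code generated by the rows of the block matrix [I_n | A]. If C is self-dual over R_{k,m}, then μ(C) is a binary self-dual code of length 2n (it is the binary code generated by the rows of [I_n | μ(A)]). -/

import Mathlib

open MvPolynomial

set_option synthInstance.maxHeartbeats 1000000
set_option maxHeartbeats 1000000

/-- The ring `R_{k,m} = F_2[u,v]/⟨u^k, v^m⟩`. -/
noncomputable abbrev Rkm (k m : ℕ) : Type :=
  MvPolynomial (Fin 2) (ZMod 2) ⧸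
    (Ideal.span {(X 0 : MvPolynomial (Fin 2) (ZMod 2)) ^ k, (X 1 : MvPolynomial (Fin 2) (ZMod 2)) ^ m})

/-- `u`, the image of `X 0` in `R_{k,m}`. -/
noncomputable def Rkm.u (k m : ℕ) : Rkm k m := Ideal.Quotient.mk _ (X 0)

/-- `v`, the image of `X 1` in `R_{k,m}`. -/
noncomputable def Rkm.v (k m : ℕ) : Rkm k m := Ideal.Quotient.mk _ (X 1)

/-- If the free code `C ⊆ R_{k,m}^{2n}` generated by the rows of `[I_n | A]` is self-dual,
then its projection `μ(C)` is a binary self-dual code of length `2n`; indeed it is the binary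
code generated by the rows of `[I_n | μ(A)]`.  Here `μ : R_{k,m} → F_2` is the natural
projection (the ring homomorphism killing `u` and `v`), applied coordinatewise, and a length
`2n` vector is indexed by `Fin n ⊕ Fin n`. -/
theorem Rkm_projection_selfDual_free (k m n : ℕ) (hk : 1 ≤ k) (hm : 1 ≤ m) (hn : 1 ≤ n)
    (μ : Rkm k m →+* ZMod 2) (hμu : μ (Rkm.u k m) = 0) (hμv : μ (Rkm.v k m) = 0)
    (A : Matrix (Fin n) (Fin n) (Rkm k m))
    (C : Submodule (Rkm k m) (Fin n ⊕ Fin n → Rkm k m))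
    (hC : C = Submodule.span (Rkm k m)
      (Set.range fun i : Fin n => Sum.elim (Pi.single i (1 : Rkm k m)) (A i)))
    (hsd : (C : Set (Fin n ⊕ Fin n → Rkm k m)) =
      {b : Fin n ⊕ Fin n → Rkm k m | ∀ a ∈ C, ∑ p, a p * b p = 0}) :
    ((fun a : Fin n ⊕ Fin n → Rkm k m => fun p => μ (a p)) '' (C : Set (Fin n ⊕ Fin n → Rkm k m)) =
      {w : Fin n ⊕ Fin n → ZMod 2 |
        ∀ x ∈ (fun a : Fin n ⊕ Fin n → Rkm k m => fun p => μ (a p)) ''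
            (C : Set (Fin n ⊕ Fin n → Rkm k m)),
          ∑ p, x p * w p = 0}) ∧
    ((fun a : Fin n ⊕ Fin n → Rkm k m => fun p => μ (a p)) '' (C : Set (Fin n ⊕ Fin n → Rkm k m)) =
      (Submodule.span (ZMod 2)
        (Set.range fun i : Fin n =>
          Sum.elim (Pi.single i (1 : ZMod 2)) (fun j => μ (A i j))) :
        Submodule (ZMod 2) (Fin n ⊕ Fin n → ZMod 2))) := by
  classical
  have hμsurj : Function.Surjective μ := by
    intro c
    fin_cases c
    · exact ⟨0, map_zero μ⟩
    · exact ⟨1, map_one μ⟩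
  haveI : RingHomSurjective μ := ⟨hμsurj⟩
  -- the semilinear projection map
  let f : (Fin n ⊕ Fin n → Rkm k m) →ₛₗ[μ] (Fin n ⊕ Fin n → ZMod 2) :=
    { toFun := fun a p => μ (a p)
      map_add' := fun a b => by ext p; simp
      map_smul' := fun r a => by ext p; simp [Pi.smul_apply, smul_eq_mul, map_mul] }
  let r : Fin n → (Fin n ⊕ Fin n → Rkm k m) := fun i => Sum.elim (Pi.single i 1) (A i)
  let G : Fin n → (Fin n ⊕ Fin n → ZMod 2) := fun i => f (r i)
  have hμsingle : ∀ (i j : Fin n), μ ((Pi.single i (1 : Rkm k m) : Fin n → Rkm k m) j) = (Pi.single i (1 : ZMod 2) : Fin n → ZMod 2) j := by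
    intro i j
    rcases eq_or_ne j i with h | h
    · subst h; simp
    · simp [Pi.single_eq_of_ne h]
  have hG : G = fun i : Fin n =>
      Sum.elim (Pi.single i (1 : ZMod 2)) (fun j => μ (A i j)) := by
    funext i p
    cases p with
    | inl j => exact hμsingle i j
    | inr j => rfl
  -- the image of C
  have hmapC : ((fun a : Fin n ⊕ Fin n → Rkm k m => fun p => μ (a p)) ''
      (C : Set (Fin n ⊕ Fin n → Rkm k m)))
      = (Submodule.span (ZMod 2) (Set.range G) : Submodule (ZMod 2) (Fin n ⊕ Fin n → ZMod 2)) := by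
    have : (fun a : Fin n ⊕ Fin n → Rkm k m => fun p => μ (a p)) ''
        (C : Set (Fin n ⊕ Fin n → Rkm k m)) = (Submodule.map f C : Set (Fin n ⊕ Fin n → ZMod 2)) := rfl
    rw [this, hC, Submodule.map_span]
    congr 2
    rw [← Set.range_comp]
    rfl
  -- orthogonality over R
  have hrC : ∀ i, r i ∈ C := by
    intro i
    rw [hC]
    exact Submodule.subset_span ⟨i, rfl⟩
  have horthR : ∀ i j, ∑ p, r i p * r j p = 0 := by
    intro i j
    have hj : r j ∈ (C : Set (Fin n ⊕ Fin n → Rkm k m)) := hrC j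
    rw [hsd] at hj
    exact hj (r i) (hrC i)
  have horthF : ∀ i j, ∑ p, G i p * G j p = 0 := by
    intro i j
    have h1 : μ (∑ p, r i p * r j p) = 0 := by rw [horthR i j, map_zero]
    rw [map_sum] at h1
    simp only [map_mul] at h1; exact h1
  -- linear independence of G
  have hGind : LinearIndependent (ZMod 2) G := by
    have hL : LinearMap.funLeft (ZMod 2) (ZMod 2) (Sum.inl : Fin n → Fin n ⊕ Fin n) ∘ G
        = fun i : Fin n => Pi.single i (1 : ZMod 2) := by
      funext i j
      exact hμsingle i j
    have hb : LinearIndependent (ZMod 2) (fun i : Fin n => Pi.single i (1 : ZMod 2)) := by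
      have h := (Pi.basisFun (ZMod 2) (Fin n)).linearIndependent
      have he : ⇑(Pi.basisFun (ZMod 2) (Fin n)) = fun i : Fin n => Pi.single i (1 : ZMod 2) :=
        funext fun i => by simp
      rwa [he] at h
    have hcomp : LinearIndependent (ZMod 2)
        (⇑(LinearMap.funLeft (ZMod 2) (ZMod 2) (Sum.inl : Fin n → Fin n ⊕ Fin n)) ∘ G) := by
      rw [hL]; exact hb
    exact LinearIndependent.of_comp _ hcomp
  have hspanrank : Module.finrank (ZMod 2) (Submodule.span (ZMod 2) (Set.range G)) = n := by
    rw [finrank_span_eq_card hGind, Fintype.card_fin]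
  -- the map whose kernel is the dual code
  let T : (Fin n ⊕ Fin n → ZMod 2) →ₗ[ZMod 2] (Fin n → ZMod 2) :=
    { toFun := fun w i => ∑ p, G i p * w p
      map_add' := fun w₁ w₂ => by
        funext i
        simp only [Pi.add_apply, mul_add, Finset.sum_add_distrib]
      map_smul' := fun c w => by
        funext i
        simp only [Pi.smul_apply, smul_eq_mul, RingHom.id_apply, Finset.mul_sum]
        exact Finset.sum_congr rfl fun p _ => by ring }
  have hTsurj : Function.Surjective T := by
    intro x
    refine ⟨Sum.elim x 0, ?_⟩
    funext i
    show (∑ p, G i p * Sum.elim x 0 p) = x i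
    rw [Fintype.sum_sum_type]
    have h2 : ∀ j : Fin n, G i (Sum.inr j) * Sum.elim x (0 : Fin n → ZMod 2) (Sum.inr j) = 0 := by
      intro j; exact mul_zero _
    have h1 : ∀ j : Fin n, G i (Sum.inl j) * Sum.elim x (0 : Fin n → ZMod 2) (Sum.inl j)
        = (Pi.single i (1 : ZMod 2) : Fin n → ZMod 2) j * x j := by
      intro j; rw [hG]; rfl
    rw [Finset.sum_congr rfl (fun j _ => h1 j), Finset.sum_congr rfl (fun j _ => h2 j)]
    simp only [Finset.sum_const_zero, add_zero, Pi.single_apply, ite_mul, one_mul, zero_mul,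
      Finset.sum_ite_eq', Finset.mem_univ, if_true]
  have hkerrank : Module.finrank (ZMod 2) (LinearMap.ker T) = n := by
    have h := LinearMap.finrank_range_add_finrank_ker T
    rw [LinearMap.range_eq_top.mpr hTsurj] at h
    rw [finrank_top, Module.finrank_fintype_fun_eq_card, Module.finrank_fintype_fun_eq_card,
      Fintype.card_fin, Fintype.card_sum, Fintype.card_fin] at h
    omega
  have hle : Submodule.span (ZMod 2) (Set.range G) ≤ LinearMap.ker T := by
    rw [Submodule.span_le]
    rintro _ ⟨j, rfl⟩
    simp only [SetLike.mem_coe, LinearMap.mem_ker]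
    funext i
    exact horthF i j
  have hkey : Submodule.span (ZMod 2) (Set.range G) = LinearMap.ker T :=
    Submodule.eq_of_le_of_finrank_eq hle (by rw [hspanrank, hkerrank])
  -- the dual set equals the kernel set
  have hdual : {w : Fin n ⊕ Fin n → ZMod 2 |
      ∀ x ∈ (Submodule.span (ZMod 2) (Set.range G) : Set (Fin n ⊕ Fin n → ZMod 2)),
        ∑ p, x p * w p = 0} = (LinearMap.ker T : Set (Fin n ⊕ Fin n → ZMod 2)) := by
    ext w
    constructor
    · intro hw
      simp only [SetLike.mem_coe, LinearMap.mem_ker]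
      funext i
      exact hw (G i) (Submodule.subset_span ⟨i, rfl⟩)
    · intro hw x hx
      have hw' : T w = 0 := hw
      refine Submodule.span_induction ?_ ?_ ?_ ?_ hx
      · rintro _ ⟨i, rfl⟩
        exact congrFun hw' i
      · simp
      · intro y z _ _ hy hz
        simp [add_mul, Finset.sum_add_distrib, hy, hz]
      · intro c y _ hy
        simp only [Pi.smul_apply, smul_eq_mul, mul_assoc]
        rw [← Finset.mul_sum, hy, mul_zero]
  constructor
  · rw [hmapC, hdual, ← hkey]
  · rw [hmapC, hG]
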